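/- Let p ≥ 1 and let C be a real symmetric positive definite p × p matrix. Let M be the Markov transform of C. Then: (a) M is symmetric positive definite; (b) M agrees with C on the tridiagonal band, i.e., M_{j,k} = C_{j,k} whenever |j − k| ≤ 1; and (c) the inverse M⁻¹ is tridiagonal, i.e., (M⁻¹)_{j,k} = 0 whenever |j − k| ≥ 2. -/

import Mathlib

/-- The regression coefficient `β_{l+1} = C_{l,l+1} / C_{l,l}` of a matrix `C`
(0-based indices), with junk value `0` when out of range. -/
noncomputable def regressionStep {p : ℕ} (C : Matrix (Fin p) (Fin p) ℝ) (l : ℕ) : ℝ :=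
  if h : l + 1 < p then
    C ⟨l, Nat.lt_of_succ_lt h⟩ ⟨l + 1, h⟩ / C ⟨l, Nat.lt_of_succ_lt h⟩ ⟨l, Nat.lt_of_succ_lt h⟩
  else 0

/-- The **Markov transform** of a matrix `C`: the symmetric matrix `M` with
`M_{j,k} = C_{j,j} ∏_{l=j}^{k−1} β_{l+1}` for `j ≤ k` (empty product `= 1`). -/
noncomputable def markovTransform {p : ℕ} (C : Matrix (Fin p) (Fin p) ℝ) :
    Matrix (Fin p) (Fin p) ℝ :=
  Matrix.of fun j k =>
    if (j : ℕ) ≤ (k : ℕ) then C j j * ∏ l ∈ Finset.Ico (j : ℕ) (k : ℕ), regressionStep C l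
    else C k k * ∏ l ∈ Finset.Ico (k : ℕ) (j : ℕ), regressionStep C l

namespace MarkovAux

open Matrix

variable {p : ℕ} (C : Matrix (Fin p) (Fin p) ℝ)

lemma prevlt (j : Fin p) : (j : ℕ) - 1 < p :=
  lt_of_le_of_lt (Nat.sub_le _ _) j.isLt

/-- The unit lower bidiagonal matrix with `-β` on the subdiagonal. -/
noncomputable def A : Matrix (Fin p) (Fin p) ℝ :=
  Matrix.of fun j k =>
    (if k = j then (1 : ℝ) else 0) +
      (if (k : ℕ) + 1 = (j : ℕ) then -(regressionStep C (k : ℕ)) else 0)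

/-- The diagonal of innovation variances. -/
noncomputable def d (j : Fin p) : ℝ :=
  if (j : ℕ) = 0 then C j j
  else C j j - regressionStep C ((j : ℕ) - 1) ^ 2 *
    C ⟨(j : ℕ) - 1, prevlt j⟩ ⟨(j : ℕ) - 1, prevlt j⟩

/-- Row `j` of `A * M`. -/
noncomputable def g (j b : Fin p) : ℝ :=
  markovTransform C j b +
    (if _h : (j : ℕ) = 0 then 0
     else -(regressionStep C ((j : ℕ) - 1)) *
        markovTransform C ⟨(j : ℕ) - 1, prevlt j⟩ b)

lemma M_diag (j : Fin p) : markovTransform C j j = C j j := by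
  simp [markovTransform]

lemma M_symm (j k : Fin p) : markovTransform C j k = markovTransform C k j := by
  rcases lt_trichotomy (j : ℕ) (k : ℕ) with h | h | h
  · simp only [markovTransform, Matrix.of_apply]
    rw [if_pos h.le, if_neg (by omega)]
  · obtain rfl : j = k := Fin.ext h
    rfl
  · simp only [markovTransform, Matrix.of_apply]
    rw [if_neg (by omega), if_pos h.le]

lemma M_step (j k : Fin p) (hk : (k : ℕ) + 1 < p) (h : (j : ℕ) ≤ (k : ℕ)) :
    markovTransform C j ⟨(k : ℕ) + 1, hk⟩ =
      markovTransform C j k * regressionStep C (k : ℕ) := by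
  simp only [markovTransform, Matrix.of_apply]
  rw [if_pos (show (j : ℕ) ≤ (k : ℕ) + 1 by omega), if_pos h,
    Finset.prod_Ico_succ_top h, mul_assoc]

lemma M_pred (r k : Fin p) (h : (r : ℕ) < (k : ℕ)) :
    markovTransform C r k =
      markovTransform C r ⟨(k : ℕ) - 1, prevlt k⟩ * regressionStep C ((k : ℕ) - 1) := by
  have hkp : (k : ℕ) < p := k.isLt
  have hk1 : ((k : ℕ) - 1) + 1 < p := by omega
  have hkk : (⟨((k : ℕ) - 1) + 1, hk1⟩ : Fin p) = k := Fin.ext (by simp; omega)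
  rw [← hkk]
  exact M_step C r ⟨(k : ℕ) - 1, prevlt k⟩ hk1 (by simpa using by omega)

lemma rowsum (j : Fin p) (f : Fin p → ℝ) :
    ∑ a, A C j a * f a =
      f j + (if _h : (j : ℕ) = 0 then 0
        else -(regressionStep C ((j : ℕ) - 1)) * f ⟨(j : ℕ) - 1, prevlt j⟩) := by
  have hsplit : ∀ a : Fin p, A C j a * f a =
      (if a = j then f a else 0) +
        (if (a : ℕ) + 1 = (j : ℕ) then -(regressionStep C (a : ℕ)) * f a else 0) := by
    intro a
    simp only [A, Matrix.of_apply]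
    split_ifs <;> ring
  rw [Finset.sum_congr rfl fun a _ => hsplit a, Finset.sum_add_distrib]
  congr 1
  · rw [Finset.sum_ite_eq' Finset.univ j f, if_pos (Finset.mem_univ j)]
  · by_cases h0 : (j : ℕ) = 0
    · rw [dif_pos h0]
      exact Finset.sum_eq_zero fun a _ => if_neg (by omega)
    · rw [dif_neg h0]
      rw [Finset.sum_eq_single (⟨(j : ℕ) - 1, prevlt j⟩ : Fin p)]
      · rw [if_pos (by simp; omega)]
      · intro a _ ha
        refine if_neg fun hc => ha (Fin.ext ?_)
        simp
        omega
      · intro h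
        exact absurd (Finset.mem_univ _) h

lemma AM_apply (j b : Fin p) : (A C * markovTransform C) j b = g C j b := by
  rw [Matrix.mul_apply, rowsum]
  rfl

lemma g_lt (j k : Fin p) (h : (k : ℕ) < (j : ℕ)) : g C j k = 0 := by
  have hj0 : ¬ (j : ℕ) = 0 := by omega
  rw [g, dif_neg hj0, M_symm C j k, M_pred C k j h,
    M_symm C k ⟨(j : ℕ) - 1, prevlt j⟩]
  ring

lemma g_step (j k : Fin p) (h : (j : ℕ) < (k : ℕ)) :
    g C j k = g C j ⟨(k : ℕ) - 1, prevlt k⟩ * regressionStep C ((k : ℕ) - 1) := by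
  by_cases h0 : (j : ℕ) = 0
  · rw [g, g, dif_pos h0, dif_pos h0, M_pred C j k h]
    ring
  · rw [g, g, dif_neg h0, dif_neg h0, M_pred C j k h,
      M_pred C ⟨(j : ℕ) - 1, prevlt j⟩ k (by simp; omega)]
    ring

lemma g_diag (j : Fin p) : g C j j = d C j := by
  by_cases h0 : (j : ℕ) = 0
  · rw [g, d, if_pos h0, dif_pos h0, M_diag]
    ring
  · rw [g, d, if_neg h0, dif_neg h0,
      M_pred C ⟨(j : ℕ) - 1, prevlt j⟩ j (by simp; omega), M_diag,
      M_diag C ⟨(j : ℕ) - 1, prevlt j⟩]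
    ring

lemma key : A C * markovTransform C * (A C)ᵀ = Matrix.diagonal (d C) := by
  ext j k
  have e1 : (A C * markovTransform C * (A C)ᵀ) j k
      = ∑ b, A C k b * g C j b := by
    rw [Matrix.mul_apply]
    exact Finset.sum_congr rfl fun b _ => by
      rw [Matrix.transpose_apply, AM_apply, mul_comm]
  rw [e1, rowsum C k (g C j)]
  rcases lt_trichotomy (j : ℕ) (k : ℕ) with h | h | h
  · rw [Matrix.diagonal_apply_ne _ (Fin.ne_of_val_ne (by omega)),
      dif_neg (show ¬ (k : ℕ) = 0 by omega), g_step C j k h]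
    ring
  · obtain rfl : j = k := Fin.ext h
    rw [Matrix.diagonal_apply_eq]
    by_cases h0 : (j : ℕ) = 0
    · rw [dif_pos h0, g_diag]
      ring
    · rw [dif_neg h0, g_diag, g_lt C j ⟨(j : ℕ) - 1, prevlt j⟩ (by simp; omega)]
      ring
  · rw [Matrix.diagonal_apply_ne _ (Fin.ne_of_val_ne (by omega)), g_lt C j k h]
    by_cases h0 : (k : ℕ) = 0
    · rw [dif_pos h0]
      ring
    · rw [dif_neg h0, g_lt C j ⟨(k : ℕ) - 1, prevlt k⟩ (by simp; omega)]
      ring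

lemma A_triangular : (A C).BlockTriangular OrderDual.toDual := by
  intro i j hij
  have h' : (i : ℕ) < (j : ℕ) := hij
  simp only [A, Matrix.of_apply]
  rw [if_neg (Fin.ne_of_val_ne (by omega)), if_neg (by omega), add_zero]

lemma detA : (A C).det = 1 := by
  rw [Matrix.det_of_lowerTriangular _ (A_triangular C)]
  refine Finset.prod_eq_one fun i _ => ?_
  simp [A]

lemma diag_pos (hpd : C.PosDef) (i : Fin p) : 0 < C i i := by
  have h := hpd.dotProduct_mulVec_pos (x := Pi.single i 1) (by
    intro hc
    have := congrFun hc i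
    simp at this)
  simpa [Matrix.mulVec_single, single_dotProduct] using h

lemma d_pos (hpd : C.PosDef) (j : Fin p) : 0 < d C j := by
  by_cases h0 : (j : ℕ) = 0
  · rw [d, if_pos h0]
    exact diag_pos C hpd j
  · set j' : Fin p := ⟨(j : ℕ) - 1, prevlt j⟩ with hj'
    set b : ℝ := regressionStep C ((j : ℕ) - 1) with hbdef
    have hlt : (j : ℕ) - 1 + 1 < p := by
      have := j.isLt; omega
    have hb : b * C j' j' = C j' j := by
      rw [hbdef, regressionStep, dif_pos hlt]
      have e1 : (⟨(j : ℕ) - 1, Nat.lt_of_succ_lt hlt⟩ : Fin p) = j' := rfl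
      have e2 : (⟨(j : ℕ) - 1 + 1, hlt⟩ : Fin p) = j := Fin.ext (by simp; omega)
      rw [e1, e2, div_mul_cancel₀ _ (ne_of_gt (diag_pos C hpd j'))]
    have hsym : C j j' = C j' j := by
      have := hpd.1.apply j j'
      simpa using this.symm
    have hne : j' ≠ j := Fin.ne_of_val_ne (by simp [hj']; omega)
    set x : Fin p → ℝ := Pi.single j 1 + Pi.single j' (-b) with hx
    have hxne : x ≠ 0 := by
      intro hc
      have := congrFun hc j
      rw [hx] at this
      simp only [Pi.add_apply, Pi.single_eq_same, Pi.zero_apply] at this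
      rw [Pi.single_eq_of_ne (Ne.symm hne)] at this
      norm_num at this
    have hq := hpd.dotProduct_mulVec_pos hxne
    have hval : dotProduct (star x) (C *ᵥ x) = d C j := by
      have hstar : star x = x := by
        funext i; simp [hx]
      rw [hstar, hx, Matrix.mulVec_add, Matrix.mulVec_single, Matrix.mulVec_single,
        add_dotProduct, single_dotProduct, single_dotProduct]
      simp only [Pi.add_apply]
      simp only [Pi.smul_apply, Matrix.col_apply, op_smul_eq_mul]
      rw [d, if_neg h0]
      have hjj' : C j j' = b * C j' j' := by rw [hsym, hb]
      have hj'j : C j' j = b * C j' j' := by rw [← hb]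
      rw [hjj', hj'j]
      ring
    rw [← hval]
    exact hq

end MarkovAux

open Matrix in
/-- **Basic properties of the Markov transform.**
For a real symmetric positive definite matrix `C`, its Markov transform `M` is
(a) symmetric positive definite, (b) agrees with `C` on the tridiagonal band, and
(c) has tridiagonal inverse. -/
theorem markovTransform_posDef_band_tridiagonal
    (p : ℕ) (hp : 1 ≤ p) (C : Matrix (Fin p) (Fin p) ℝ) (hpd : C.PosDef) :
    (markovTransform C).PosDef ∧
      (∀ j k : Fin p, |(j : ℤ) - (k : ℤ)| ≤ 1 → markovTransform C j k = C j k) ∧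
      (∀ j k : Fin p, 2 ≤ |(j : ℤ) - (k : ℤ)| → (markovTransform C)⁻¹ j k = 0) := by
  classical
  set M : Matrix (Fin p) (Fin p) ℝ := markovTransform C with hMdef
  set A : Matrix (Fin p) (Fin p) ℝ := MarkovAux.A C with hAdef
  set D : Matrix (Fin p) (Fin p) ℝ := Matrix.diagonal (MarkovAux.d C) with hDdef
  have hkey : A * M * Aᵀ = D := MarkovAux.key C
  have hdpos : ∀ i, 0 < MarkovAux.d C i := MarkovAux.d_pos C hpd
  have hAdet : IsUnit A.det := by rw [hAdef, MarkovAux.detA]; exact isUnit_one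
  have hATdet : IsUnit Aᵀ.det := by
    rw [Matrix.det_transpose, hAdef, MarkovAux.detA]; exact isUnit_one
  have hDdet : IsUnit D.det := by
    rw [hDdef, Matrix.det_diagonal]
    exact (isUnit_iff_ne_zero).mpr (Finset.prod_pos (fun i _ => hdpos i)).ne'
  have hAinvA : A⁻¹ * A = 1 := Matrix.nonsing_inv_mul _ hAdet
  have hATinv : Aᵀ * (Aᵀ)⁻¹ = 1 := Matrix.mul_nonsing_inv _ hATdet
  have hDinv : D * D⁻¹ = 1 := Matrix.mul_nonsing_inv _ hDdet
  have hMAt : M * Aᵀ = A⁻¹ * D := by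
    calc M * Aᵀ = (A⁻¹ * A) * (M * Aᵀ) := by rw [hAinvA, one_mul]
    _ = A⁻¹ * (A * M * Aᵀ) := by simp only [Matrix.mul_assoc]
    _ = A⁻¹ * D := by rw [hkey]
  have hMexpr : M = A⁻¹ * D * (A⁻¹)ᵀ := by
    rw [Matrix.transpose_nonsing_inv]
    calc M = M * (Aᵀ * (Aᵀ)⁻¹) := by rw [hATinv, mul_one]
    _ = (M * Aᵀ) * (Aᵀ)⁻¹ := by simp only [Matrix.mul_assoc]
    _ = A⁻¹ * D * (Aᵀ)⁻¹ := by rw [hMAt]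
  have hDpd : D.PosDef := Matrix.PosDef.diagonal hdpos
  have hBdet : (A⁻¹).det ≠ 0 := by
    intro hc
    have : (A⁻¹ * A).det = 0 := by rw [Matrix.det_mul, hc, zero_mul]
    rw [hAinvA, Matrix.det_one] at this
    exact one_ne_zero this
  have hMpd : M.PosDef := by
    rw [hMexpr]
    refine Matrix.PosDef.of_dotProduct_mulVec_pos ?_ ?_
    · show (A⁻¹ * D * (A⁻¹)ᵀ)ᴴ = A⁻¹ * D * (A⁻¹)ᵀ
      have : (A⁻¹ * D * (A⁻¹)ᵀ)ᴴ = (A⁻¹ * D * (A⁻¹)ᵀ)ᵀ := by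
        ext i k
        simp [Matrix.conjTranspose_apply, Matrix.transpose_apply]
      rw [this, Matrix.transpose_mul, Matrix.transpose_mul, Matrix.transpose_transpose,
        hDdef, Matrix.diagonal_transpose, Matrix.mul_assoc]
    · intro x hx
      set y : Fin p → ℝ := (A⁻¹)ᵀ *ᵥ x with hy
      have hyne : y ≠ 0 := by
        intro hc
        apply hx
        refine Matrix.eq_zero_of_mulVec_eq_zero ?_ hc
        rw [Matrix.det_transpose]
        exact hBdet
      have hrw : dotProduct (star x) ((A⁻¹ * D * (A⁻¹)ᵀ) *ᵥ x)
          = dotProduct (star y) (D *ᵥ y) := by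
        rw [← Matrix.mulVec_mulVec, ← Matrix.mulVec_mulVec, dotProduct_mulVec (star x)]
        congr 1
        have : star y = star x ᵥ* A⁻¹ := by
          rw [hy, Matrix.star_mulVec]
          congr 1
          all_goals
            ext i k
            simp [Matrix.conjTranspose_apply, Matrix.transpose_apply]
        rw [this]
      rw [hrw]
      exact hDpd.dotProduct_mulVec_pos hyne
  have hMinv : M⁻¹ = Aᵀ * D⁻¹ * A := by
    apply Matrix.inv_eq_right_inv
    calc M * (Aᵀ * D⁻¹ * A) = (M * Aᵀ) * D⁻¹ * A := by simp only [Matrix.mul_assoc]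
    _ = A⁻¹ * (D * D⁻¹) * A := by rw [hMAt]; simp only [Matrix.mul_assoc]
    _ = A⁻¹ * A := by rw [hDinv, mul_one]
    _ = 1 := hAinvA
  refine ⟨hMpd, ?_, ?_⟩
  · -- band agreement
    intro j k hjk
    have hjk' : (j : ℕ) = (k : ℕ) ∨ (j : ℕ) + 1 = (k : ℕ) ∨ (k : ℕ) + 1 = (j : ℕ) := by
      have h1 := abs_le.mp hjk
      have e1 : ((j : ℤ)) = ((j : ℕ) : ℤ) := rfl
      have e2 : ((k : ℤ)) = ((k : ℕ) : ℤ) := rfl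
      rw [e1, e2] at h1
      omega
    rcases hjk' with h | h | h
    · obtain rfl : j = k := Fin.ext h
      exact MarkovAux.M_diag C j
    · have hlt : (j : ℕ) + 1 < p := by have := k.isLt; omega
      show markovTransform C j k = C j k
      simp only [markovTransform, Matrix.of_apply]
      rw [if_pos (by omega), show Finset.Ico (j : ℕ) (k : ℕ) = {(j : ℕ)} by
        rw [← h]; exact Nat.Ico_succ_singleton _, Finset.prod_singleton]
      simp only [regressionStep]
      rw [dif_pos hlt]
      have e1 : (⟨(j : ℕ), Nat.lt_of_succ_lt hlt⟩ : Fin p) = j := Fin.eta j _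
      have e2 : (⟨(j : ℕ) + 1, hlt⟩ : Fin p) = k := Fin.ext (by simp; omega)
      rw [e1, e2, mul_comm, div_mul_cancel₀ _ (ne_of_gt (MarkovAux.diag_pos C hpd j))]
    · have hlt : (k : ℕ) + 1 < p := by have := j.isLt; omega
      show markovTransform C j k = C j k
      simp only [markovTransform, Matrix.of_apply]
      rw [if_neg (by omega), show Finset.Ico (k : ℕ) (j : ℕ) = {(k : ℕ)} by
        rw [← h]; exact Nat.Ico_succ_singleton _, Finset.prod_singleton]
      simp only [regressionStep]
      rw [dif_pos hlt]
      have e1 : (⟨(k : ℕ), Nat.lt_of_succ_lt hlt⟩ : Fin p) = k := Fin.eta k _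
      have e2 : (⟨(k : ℕ) + 1, hlt⟩ : Fin p) = j := Fin.ext (by simp; omega)
      rw [e1, e2, mul_comm, div_mul_cancel₀ _ (ne_of_gt (MarkovAux.diag_pos C hpd k))]
      have := hpd.1.apply j k
      simpa using this
  · -- tridiagonal inverse
    intro j k hjk
    have habs : (j : ℕ) + 2 ≤ (k : ℕ) ∨ (k : ℕ) + 2 ≤ (j : ℕ) := by
      have e1 : ((j : ℤ)) = ((j : ℕ) : ℤ) := rfl
      have e2 : ((k : ℤ)) = ((k : ℕ) : ℤ) := rfl
      rcases le_abs.mp hjk with h | h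
      · rw [e1, e2] at h; omega
      · rw [e1, e2] at h; omega
    have hApply : ∀ a j' : Fin p,
        ¬((a : ℕ) = (j' : ℕ) ∨ (a : ℕ) = (j' : ℕ) + 1) → A a j' = 0 := by
      intro a j' hne
      push_neg at hne
      simp only [hAdef, MarkovAux.A, Matrix.of_apply]
      rw [if_neg (Fin.ne_of_val_ne (by omega)), if_neg (by omega), add_zero]
    have hentry : M⁻¹ j k = ∑ a, A a j * (Ring.inverse (MarkovAux.d C) a * A a k) := by
      rw [hMinv, hDdef, Matrix.inv_diagonal, Matrix.mul_assoc, Matrix.mul_apply]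
      refine Finset.sum_congr rfl fun a _ => ?_
      rw [Matrix.transpose_apply]
      congr 1
      rw [Matrix.mul_apply, Finset.sum_eq_single a]
      · rw [Matrix.diagonal_apply_eq]
      · intro b _ hb
        rw [Matrix.diagonal_apply_ne _ (Ne.symm hb), zero_mul]
      · intro h
        exact absurd (Finset.mem_univ _) h
    rw [hentry]
    refine Finset.sum_eq_zero fun a _ => ?_
    have hzero : A a j = 0 ∨ A a k = 0 := by
      by_cases h1 : (a : ℕ) = (j : ℕ) ∨ (a : ℕ) = (j : ℕ) + 1
      · right
        exact hApply a k (by omega)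
      · left
        exact hApply a j h1
    rcases hzero with h | h
    · rw [h, zero_mul]
    · rw [h, mul_zero, mul_zero]
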